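/- For real (or rational) parameters with n ≥ 1, a > 0, b > na, the function F(λ) = (2/3)·ν·(λ³·(-n) - 3λ²(b-na)) + 2λ² + 2λ(b-na), with ν = ((2-n)a+2b)/(2ab-na²), is continuous in λ, satisfies F(0) = 0, and F(a) < 0; hence there exists λ with 0 < λ < a and F(λ) < 0. -/

import Mathlib

open Set

/-- The generalised Futaki invariant `F(λ)` of the slope test configuration of
`(F_n, aZ_n + bF)` centred at `Z_n` is continuous in `λ`, vanishes at `λ = 0`,
is negative at `λ = a`; hence it is negative for some `0 < λ < a`. -/
theorem futaki_continuous_negative (n : ℕ) (hn : 1 ≤ n) (a b : ℝ)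
    (ha : 0 < a) (hb : (n : ℝ) * a < b) :
    let ν : ℝ := ((2 - (n : ℝ)) * a + 2 * b) / (2 * a * b - n * a ^ 2)
    let F : ℝ → ℝ := fun l =>
      (2 / 3) * ν * (l ^ 3 * (-(n : ℝ)) - 3 * l ^ 2 * (b - n * a)) +
        2 * l ^ 2 + 2 * l * (b - n * a)
    Continuous F ∧ F 0 = 0 ∧ F a < 0 ∧ ∃ l : ℝ, 0 < l ∧ l < a ∧ F l < 0 := by
  intro ν F
  have hn1 : (1 : ℝ) ≤ (n : ℝ) := by exact_mod_cast hn
  have hD : 0 < 2 * a * b - (n : ℝ) * a ^ 2 := by nlinarith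
  have hcont : Continuous F := by
    unfold F
    continuity
  have hFa : F a < 0 := by
    have heq : F a = (2 / 3) * n * a ^ 3 * (a + n * a - 2 * b) /
        (2 * a * b - (n : ℝ) * a ^ 2) := by
      unfold F ν
      have hne : (2 : ℝ) * b - n * a ≠ 0 := by nlinarith
      field_simp [ha.ne', hD.ne', hne]
      ring
    rw [heq]
    apply div_neg_of_neg_of_pos _ hD
    have h1 : (0 : ℝ) < 2 / 3 * n * a ^ 3 := by positivity
    have h2 : a + (n : ℝ) * a - 2 * b < 0 := by nlinarith
    exact mul_neg_of_pos_of_neg h1 h2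
  refine ⟨hcont, by simp [F], hFa, ?_⟩
  have hU : IsOpen {l : ℝ | F l < 0} := isOpen_lt hcont continuous_const
  have hmem : {l : ℝ | F l < 0} ∈ nhdsWithin a (Iio a) :=
    nhdsWithin_le_nhds (hU.mem_nhds hFa)
  have hmem2 : Ioi (0 : ℝ) ∈ nhdsWithin a (Iio a) :=
    nhdsWithin_le_nhds ((isOpen_Ioi).mem_nhds ha)
  have hmem3 : Iio a ∈ nhdsWithin a (Iio a) := self_mem_nhdsWithin
  obtain ⟨l, hl⟩ := Filter.nonempty_of_mem
    (Filter.inter_mem hmem (Filter.inter_mem hmem2 hmem3))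
  exact ⟨l, hl.2.1, hl.2.2, hl.1⟩
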